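/- Let μ be a free measure on ℕ and δ ∈ [0,1) such that every partition of ℕ into finite sets has a selector S with μ(S) > δ. Then there exists ε > δ such that every partition of ℕ into finite sets has a selector S with μ(S) ≥ ε. -/

import Mathlib

open Filter

/-- A finitely additive probability measure defined on all subsets of `ℕ`. -/
def IsMeasure (μ : Set ℕ → ℝ) : Prop :=
  (∀ A : Set ℕ, 0 ≤ μ A ∧ μ A ≤ 1) ∧ μ Set.univ = 1 ∧
    ∀ A B : Set ℕ, Disjoint A B → μ (A ∪ B) = μ A + μ B

/-- A measure is free if it vanishes on finite sets. -/
def IsFree (μ : Set ℕ → ℝ) : Prop := ∀ A : Set ℕ, A.Finite → μ A = 0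

/-- A function is finite-to-one if all fibers are finite. -/
def FinToOne (f : ℕ → ℕ) : Prop := ∀ n : ℕ, (f ⁻¹' {n}).Finite

/-- Rudin-Blass reducibility: `ν ≤_RB μ` via a finite-to-one map. -/
def RBLe (ν μ : Set ℕ → ℝ) : Prop :=
  ∃ f : ℕ → ℕ, FinToOne f ∧ ∀ A : Set ℕ, μ (f ⁻¹' A) = ν A

/-- Rudin-Keisler reducibility: `ν ≤_RK μ`. -/
def RKLe (ν μ : Set ℕ → ℝ) : Prop :=
  ∃ f : ℕ → ℕ, ∀ A : Set ℕ, μ (f ⁻¹' A) = ν A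

/-- A measure is shift invariant if `μ(A + 1) = μ(A)`. -/
def ShiftInvariant (μ : Set ℕ → ℝ) : Prop :=
  ∀ A : Set ℕ, μ ((fun n => n + 1) '' A) = μ A

/-- A measure extends the asymptotic density. -/
def ExtendsDensity (μ : Set ℕ → ℝ) : Prop :=
  ∀ (A : Set ℕ) (d : ℝ),
    Tendsto (fun n : ℕ => ((A ∩ Set.Iio n).ncard : ℝ) / n) atTop (nhds d) → μ A = d

/-- A partition of `ℕ` indexed by `ℕ`. -/
def IsPartition (A : ℕ → Set ℕ) : Prop :=
  Pairwise (Function.onFun Disjoint A) ∧ (⋃ n, A n) = Set.univ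

/-- A selector of a partition: meets each piece in at most one point. -/
def IsSelector (S : Set ℕ) (A : ℕ → Set ℕ) : Prop :=
  ∀ n : ℕ, (S ∩ A n).Subsingleton

/-- A Q-measure: each partition into finite sets has a selector of full measure. -/
def IsQMeasure (μ : Set ℕ → ℝ) : Prop :=
  ∀ A : ℕ → Set ℕ, IsPartition A → (∀ n, (A n).Finite) →
    ∃ S : Set ℕ, IsSelector S A ∧ μ S = 1

/-- A Q⁺-measure: each partition into finite sets has a selector of positive measure. -/
def IsQPlusMeasure (μ : Set ℕ → ℝ) : Prop :=
  ∀ A : ℕ → Set ℕ, IsPartition A → (∀ n, (A n).Finite) →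
    ∃ S : Set ℕ, IsSelector S A ∧ 0 < μ S

/-- A P-measure: each partition has a pseudo-selector of the largest possible measure. -/
def IsPMeasure (μ : Set ℕ → ℝ) : Prop :=
  ∀ A : ℕ → Set ℕ, IsPartition A →
    ∃ S : Set ℕ, (∀ n, (S ∩ A n).Finite) ∧ μ S = 1 - ∑' n, μ (A n)

/-- A selective measure: each partition has a selector of the largest possible measure. -/
def IsSelectiveMeasure (μ : Set ℕ → ℝ) : Prop :=
  ∀ A : ℕ → Set ℕ, IsPartition A →
    ∃ S : Set ℕ, IsSelector S A ∧ μ S = 1 - ∑' n, μ (A n)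

/-- A non-atomic measure: finite partitions into pieces of arbitrarily small measure. -/
def NonAtomic (μ : Set ℕ → ℝ) : Prop :=
  ∀ ε : ℝ, 0 < ε → ∃ (N : ℕ) (P : Fin N → Set ℕ),
    Pairwise (Function.onFun Disjoint P) ∧ (⋃ i, P i) = Set.univ ∧ ∀ i, μ (P i) < ε

/-- The continuum hypothesis: `2 ^ ℵ₀ = ℵ₁`. -/
def CH : Prop := (2 : Cardinal.{0}) ^ Cardinal.aleph0.{0} = Cardinal.aleph.{0} 1



lemma aux_mu_empty {μ : Set ℕ → ℝ} (hμ : IsMeasure μ) : μ ∅ = 0 := by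
  have := hμ.2.2 Set.univ ∅ (Set.disjoint_empty _)
  rw [Set.union_empty] at this
  linarith

lemma aux_mu_mono {μ : Set ℕ → ℝ} (hμ : IsMeasure μ) {X Y : Set ℕ} (hXY : X ⊆ Y) :
    μ X ≤ μ Y := by
  have h1 := hμ.2.2 X (Y \ X) Set.disjoint_sdiff_right
  rw [Set.union_diff_cancel hXY] at h1
  have := (hμ.1 (Y \ X)).1
  linarith

lemma aux_mu_union_le {μ : Set ℕ → ℝ} (hμ : IsMeasure μ) (X Y : Set ℕ) :
    μ (X ∪ Y) ≤ μ X + μ Y := by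
  have h1 := hμ.2.2 X (Y \ X) Set.disjoint_sdiff_right
  rw [Set.union_diff_self] at h1
  have := aux_mu_mono hμ (Set.diff_subset : Y \ X ⊆ Y)
  linarith

lemma aux_mu_diff_fin {μ : Set ℕ → ℝ} (hμ : IsMeasure μ) (hfree : IsFree μ)
    {X F : Set ℕ} (hF : F.Finite) : μ (X \ F) = μ X := by
  apply le_antisymm (aux_mu_mono hμ Set.diff_subset)
  have h1 : X ⊆ (X \ F) ∪ (X ∩ F) := by
    intro x hx
    by_cases hxf : x ∈ F
    · exact Or.inr ⟨hx, hxf⟩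
    · exact Or.inl ⟨hx, hxf⟩
  have h2 : μ (X ∩ F) = 0 := hfree _ (hF.subset Set.inter_subset_right)
  have := aux_mu_union_le hμ (X \ F) (X ∩ F)
  have := aux_mu_mono hμ h1
  linarith

lemma aux_cover {f : ℕ → ℕ} (hf0 : f 0 = 0) (hf : ∀ k, f k < f (k+1)) (x : ℕ) :
    ∃ i, f i ≤ x ∧ x < f (i+1) := by
  induction x with
  | zero => exact ⟨0, by omega, by have := hf 0; omega⟩
  | succ x ih =>
    obtain ⟨i, h1, h2⟩ := ih
    rcases eq_or_lt_of_le (Nat.succ_le_of_lt h2) with heq | hlt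
    · exact ⟨i+1, by omega, by have := hf (i+1); omega⟩
    · exact ⟨i, by omega, hlt⟩

lemma aux_ico_uniq {f : ℕ → ℕ} (hf : ∀ k, f k < f (k+1)) {p q x : ℕ}
    (hp1 : f p ≤ x) (hp2 : x < f (p+1)) (hq1 : f q ≤ x) (hq2 : x < f (q+1)) : p = q := by
  have hmono : Monotone f := monotone_nat_of_le_succ (fun k => (hf k).le)
  by_contra hne
  rcases Nat.lt_or_ge p q with hlt | hge
  · have := hmono (by omega : p + 1 ≤ q); omega
  · have := hmono (by omega : q + 1 ≤ p); omega

/-- If every partition of `ℕ` into finite sets has a selector of measure strictly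
greater than `δ`, then there is `ε > δ` such that every partition into finite sets
has a selector of measure at least `ε`. -/
theorem stmt_16 (μ : Set ℕ → ℝ) (hμ : IsMeasure μ) (hfree : IsFree μ) (δ : ℝ)
    (hδ0 : 0 ≤ δ) (hδ1 : δ < 1)
    (h : ∀ A : ℕ → Set ℕ, IsPartition A → (∀ n, (A n).Finite) →
      ∃ S : Set ℕ, IsSelector S A ∧ δ < μ S) :
    ∃ ε : ℝ, δ < ε ∧ ∀ A : ℕ → Set ℕ, IsPartition A → (∀ n, (A n).Finite) →
      ∃ S : Set ℕ, IsSelector S A ∧ ε ≤ μ S := by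
  classical
  by_contra hcon
  push_neg at hcon
  have hone : ∀ n : ℕ, δ < δ + 1/((n:ℝ)+1) := by
    intro n
    have : (0:ℝ) < 1/((n:ℝ)+1) := by positivity
    linarith
  choose A hApart hAfin hAbad using fun n : ℕ => hcon (δ + 1/((n:ℝ)+1)) (hone n)
  -- block/index machinery
  have hcov : ∀ j x : ℕ, ∃ i, x ∈ A j i := by
    intro j x
    have h1 : x ∈ ⋃ i, A j i := by rw [(hApart j).2]; trivial
    simpa using h1
  choose idx hidx using hcov
  have blk_eq : ∀ j x i, x ∈ A j i → A j i = A j (idx j x) := by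
    intro j x i hx
    rcases eq_or_ne i (idx j x) with heq | hne
    · rw [heq]
    · exact absurd (hidx j x) (Set.disjoint_left.mp ((hApart j).1 hne) hx)
  -- the bounding function
  have hbound : ∀ t : ℕ, ∃ N, t < N ∧ ∀ j ≤ t, ∀ x ≤ t, ∀ y ∈ A j (idx j x), y < N := by
    intro t
    have hfin : (⋃ j ∈ Set.Iic t, ⋃ x ∈ Set.Iic t, A j (idx j x)).Finite :=
      Set.Finite.biUnion (Set.finite_Iic t) fun j _ =>
        Set.Finite.biUnion (Set.finite_Iic t) fun x _ => hAfin j _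
    obtain ⟨N, hN⟩ := hfin.bddAbove
    refine ⟨max (t+1) (N+1), by omega, ?_⟩
    intro j hj x hx y hy
    have : y ∈ ⋃ j ∈ Set.Iic t, ⋃ x ∈ Set.Iic t, A j (idx j x) := by
      simp only [Set.mem_iUnion, Set.mem_Iic]
      exact ⟨j, hj, x, hx, hy⟩
    have := hN this
    omega
  choose bnd hbnd1 hbnd2 using hbound
  obtain ⟨m, hm0, hmsucc⟩ : ∃ m : ℕ → ℕ, m 0 = 0 ∧ ∀ k, m (k+1) = bnd (m k) :=
    ⟨fun k => Nat.rec 0 (fun _ p => bnd p) k, rfl, fun k => rfl⟩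
  have hmlt : ∀ k, m k < m (k+1) := fun k => by rw [hmsucc]; exact hbnd1 (m k)
  have hmmono : StrictMono m := strictMono_nat_of_lt_succ hmlt
  have hmkey : ∀ k j x y, j ≤ m k → x ≤ m k → y ∈ A j (idx j x) → y < m (k+1) := by
    intro k j x y hj hx hy
    rw [hmsucc]
    exact hbnd2 (m k) j hj x hx y hy
  -- the nu machinery
  set nuset : Set ℕ → Set ℕ := fun X => ⋃ i ∈ X, Set.Ico (m i) (m (i+1)) with hnuset
  have hnumem : ∀ X z, z ∈ nuset X ↔ ∃ i ∈ X, m i ≤ z ∧ z < m (i+1) := by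
    intro X z
    simp only [hnuset, Set.mem_iUnion, Set.mem_Ico]
    tauto
  have hnuuniv : nuset Set.univ = Set.univ := by
    ext z
    simp only [Set.mem_univ, iff_true, hnumem]
    obtain ⟨i, h1, h2⟩ := aux_cover hm0 hmlt z
    exact ⟨i, trivial, h1, h2⟩
  have hnuunion : ∀ X Y, nuset (X ∪ Y) = nuset X ∪ nuset Y := by
    intro X Y
    simp [hnuset, Set.biUnion_union]
  have hnudisj : ∀ X Y : Set ℕ, Disjoint X Y → Disjoint (nuset X) (nuset Y) := by
    intro X Y hXY
    rw [Set.disjoint_left]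
    intro z hzX hzY
    rw [hnumem] at hzX hzY
    obtain ⟨i, hiX, hi1, hi2⟩ := hzX
    obtain ⟨i', hiY, hi1', hi2'⟩ := hzY
    have : i = i' := aux_ico_uniq hmlt hi1 hi2 hi1' hi2'
    exact Set.disjoint_left.mp hXY hiX (this ▸ hiY)
  have hnuadd : ∀ X Y : Set ℕ, Disjoint X Y →
      μ (nuset (X ∪ Y)) = μ (nuset X) + μ (nuset Y) := by
    intro X Y hXY
    rw [hnuunion]
    exact hμ.2.2 _ _ (hnudisj X Y hXY)
  have hnumono : ∀ X Y : Set ℕ, X ⊆ Y → μ (nuset X) ≤ μ (nuset Y) := by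
    intro X Y hXY
    apply aux_mu_mono hμ
    exact Set.biUnion_subset_biUnion_left hXY
  have hnufin : ∀ X : Set ℕ, X.Finite → μ (nuset X) = 0 := by
    intro X hX
    exact hfree _ (Set.Finite.biUnion hX fun i _ => Set.finite_Ico _ _)
  -- the dyadic sequence a
  obtain ⟨a, ha0, hastep⟩ : ∃ a : ℕ → ℕ, a 0 = 0 ∧ ∀ t, a (t+1) =
      if μ (nuset {i | i % 2^(t+1) = a t}) ≤ μ (nuset {i | i % 2^(t+1) = a t + 2^t})
      then a t else a t + 2^t :=
    ⟨fun t => Nat.rec 0 (fun t prev =>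
      if μ (nuset {i | i % 2^(t+1) = prev}) ≤ μ (nuset {i | i % 2^(t+1) = prev + 2^t})
      then prev else prev + 2^t) t, rfl, fun t => rfl⟩
  have hmain : ∀ t, a t < 2^t ∧ μ (nuset {i | i % 2^t = a t}) ≤ (1/2:ℝ)^t := by
    intro t
    induction t with
    | zero =>
      constructor
      · rw [ha0]; norm_num
      · have : {i : ℕ | i % 2^0 = a 0} = Set.univ := by
          ext i; simp [ha0, Nat.mod_one]
        rw [this, hnuuniv, hμ.2.1]; norm_num
    | succ t ih =>
      obtain ⟨ih1, ih2⟩ := ih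
      set Y := {i : ℕ | i % 2^(t+1) = a t} with hY
      set Z := {i : ℕ | i % 2^(t+1) = a t + 2^t} with hZ
      have hposp : (0:ℕ) < 2^t := pow_pos (by norm_num) t
      have hposp1 : (0:ℕ) < 2^(t+1) := pow_pos (by norm_num) (t+1)
      have hsplit : {i : ℕ | i % 2^t = a t} = Y ∪ Z := by
        ext i
        have hd : (2:ℕ)^t ∣ 2^(t+1) := pow_dvd_pow 2 (by omega)
        have hmm : i % 2^(t+1) % 2^t = i % 2^t := Nat.mod_mod_of_dvd i hd
        simp only [Set.mem_setOf_eq, Set.mem_union, hY, hZ]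
        constructor
        · intro hi
          have hrlt : i % 2^(t+1) < 2^(t+1) := Nat.mod_lt _ hposp1
          have hr2 : i % 2^(t+1) % 2^t = a t := by rw [hmm, hi]
          have hdm := Nat.div_add_mod (i % 2^(t+1)) (2^t)
          have hq : i % 2^(t+1) / 2^t < 2 := by
            apply Nat.div_lt_of_lt_mul
            calc i % 2^(t+1) < 2^(t+1) := hrlt
              _ = 2^t * 2 := pow_succ 2 t
          interval_cases hqc : (i % 2^(t+1) / 2^t)
          · left
            rw [Nat.mul_zero, Nat.zero_add, hr2] at hdm
            exact hdm.symm
          · right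
            rw [Nat.mul_one, hr2] at hdm
            rw [← hdm, Nat.add_comm]
        · rintro (hi | hi)
          · rw [← hmm, hi, Nat.mod_eq_of_lt ih1]
          · rw [← hmm, hi, Nat.add_mod_right, Nat.mod_eq_of_lt ih1]
      have hYZdisj : Disjoint Y Z := by
        rw [Set.disjoint_left]
        intro i hiY hiZ
        simp only [hY, hZ, Set.mem_setOf_eq] at hiY hiZ
        omega
      have hsum : μ (nuset Y) + μ (nuset Z) ≤ (1/2:ℝ)^t := by
        rw [← hnuadd Y Z hYZdisj, ← hsplit]
        exact ih2
      have hYnn := (hμ.1 (nuset Y)).1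
      have hZnn := (hμ.1 (nuset Z)).1
      rw [hastep t]
      split_ifs with hif
      · refine ⟨by have h2 : (2:ℕ)^t ≤ 2^(t+1) := Nat.pow_le_pow_right (by norm_num) (by omega)
                   omega, ?_⟩
        have hps : (1/2:ℝ)^(t+1) = (1/2)^t * (1/2) := pow_succ _ _
        have hif' : μ (nuset Y) ≤ μ (nuset Z) := hif
        show μ (nuset Y) ≤ _
        linarith
      · push_neg at hif
        refine ⟨by have : (2:ℕ)^(t+1) = 2^t + 2^t := by ring
                   omega, ?_⟩
        have hps : (1/2:ℝ)^(t+1) = (1/2)^t * (1/2) := pow_succ _ _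
        have hif' : μ (nuset Z) < μ (nuset Y) := hif
        show μ (nuset Z) ≤ _
        linarith
  
  have halt : ∀ t, a t < 2^t := fun t => (hmain t).1
  set b : ℕ → ℕ := fun j => a j + 2^j * (j+1) with hb
  have hamod : ∀ t j, t ≤ j → a j % 2^t = a t := by
    intro t j htj
    induction j, htj using Nat.le_induction with
    | base => exact Nat.mod_eq_of_lt (halt t)
    | succ j htj ih =>
      rw [hastep j]
      split_ifs
      · exact ih
      · have h2 : (2:ℕ)^j = 2^t * 2^(j-t) := by
          rw [← pow_add]
          congr 1
          omega
        rw [h2, Nat.add_mul_mod_self_left, ih]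
  have hbmod : ∀ t j, t ≤ j → b j % 2^t = a t := by
    intro t j htj
    have h2 : (2:ℕ)^j * (j+1) = 2^t * (2^(j-t) * (j+1)) := by
      rw [← mul_assoc, ← pow_add]
      congr 2
      omega
    show (a j + 2^j * (j+1)) % 2^t = a t
    rw [h2, Nat.add_mul_mod_self_left]
    exact hamod t j htj
  have hbmono : ∀ j, b j < b (j+1) := by
    intro j
    have h1 : a j < 2^j := halt j
    have h2 : (2:ℕ)^j * (j+2) ≤ 2^(j+1) * (j+2) :=
      Nat.mul_le_mul_right _ (Nat.pow_le_pow_right (by norm_num) (by omega))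
    calc b j = a j + 2^j * (j+1) := rfl
      _ < 2^j + 2^j * (j+1) := by omega
      _ = 2^j * (j+2) := by ring
      _ ≤ 2^(j+1) * (j+2) := h2
      _ ≤ a (j+1) + 2^(j+1) * (j+2) := Nat.le_add_left _ _
      _ = b (j+1) := rfl
  have hKsub : ∀ t, μ (nuset (Set.range b)) ≤ (1/2:ℝ)^t := by
    intro t
    have hsub : Set.range b ⊆ {i | i % 2^t = a t} ∪ (b '' Set.Iio t) := by
      rintro _ ⟨j, rfl⟩
      rcases Nat.lt_or_ge j t with hjt | hjt
      · exact Or.inr ⟨j, hjt, rfl⟩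
      · exact Or.inl (hbmod t j hjt)
    calc μ (nuset (Set.range b)) ≤ μ (nuset ({i | i % 2^t = a t} ∪ (b '' Set.Iio t))) :=
          hnumono _ _ hsub
      _ ≤ μ (nuset {i | i % 2^t = a t}) + μ (nuset (b '' Set.Iio t)) := by
          rw [hnuunion]; exact aux_mu_union_le hμ _ _
      _ ≤ (1/2:ℝ)^t + 0 := by
          have hz := hnufin _ ((Set.finite_Iio t).image b)
          have hm2 := (hmain t).2
          linarith
      _ = (1/2:ℝ)^t := by ring
  have hKzero : μ (nuset (Set.range b)) = 0 := by
    have hnn := (hμ.1 (nuset (Set.range b))).1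
    apply le_antisymm _ hnn
    by_contra hpos
    push_neg at hpos
    obtain ⟨t, ht⟩ := exists_pow_lt_of_lt_one hpos (by norm_num : (1/2:ℝ) < 1)
    exact absurd (hKsub t) (not_le.mpr ht)
  obtain ⟨c, hc0, hcsucc⟩ : ∃ c : ℕ → ℕ, c 0 = 0 ∧ ∀ p, c (p+1) = b p :=
    ⟨fun p => Nat.rec 0 (fun q _ => b q) p, rfl, fun p => rfl⟩
  have hb0 : b 0 = 1 := by show a 0 + 2^0 * 1 = 1; rw [ha0]; norm_num
  have hclt : ∀ p, c p < c (p+1) := by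
    intro p
    cases p with
    | zero => rw [hc0, hcsucc, hb0]; norm_num
    | succ q => rw [hcsucc, hcsucc]; exact hbmono q
  have hmc0 : m (c 0) = 0 := by rw [hc0, hm0]
  have hmclt : ∀ p, m (c p) < m (c (p+1)) := fun p => hmmono (hclt p)
  set Bp : ℕ → Set ℕ := fun p => Set.Ico (m (c p)) (m (c (p+1))) with hBpdef
  have hBpart : IsPartition Bp := by
    constructor
    · intro p q hne
      rw [Function.onFun, Set.disjoint_left]
      intro x hxp hxq
      exact hne (aux_ico_uniq hmclt hxp.1 hxp.2 hxq.1 hxq.2)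
    · ext x
      simp only [Set.mem_iUnion, Set.mem_univ, iff_true, hBpdef, Set.mem_Ico]
      exact aux_cover hmc0 hmclt x
  obtain ⟨S, hSsel, hSgt⟩ := h Bp hBpart (fun p => Set.finite_Ico _ _)
  set Kreg := nuset (Set.range b) with hKreg
  set T := S \ Kreg with hTdef
  have hTgt : δ < μ T := by
    have h1 : S ⊆ T ∪ Kreg := fun x hx => by
      by_cases hk : x ∈ Kreg
      · exact Or.inr hk
      · exact Or.inl ⟨hx, hk⟩
    have h2 := aux_mu_mono hμ h1
    have h3 := aux_mu_union_le hμ T Kreg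
    linarith
  have hTb : ∀ n : ℕ, μ T < δ + 1/((n:ℝ)+1) := by
    intro n
    set F : Set ℕ := ⋃ x ∈ Set.Iio (m n), A n (idx n x) with hF
    have hFfin : F.Finite :=
      Set.Finite.biUnion (Set.finite_Iio _) fun x _ => hAfin n _
    have hTF : μ (T \ F) = μ T := aux_mu_diff_fin hμ hfree hFfin
    have hsel : IsSelector (T \ F) (A n) := by
      intro i u hu v hv
      by_cases hex : ∃ x ∈ A n i, x < m n
      · obtain ⟨x, hxA, hxlt⟩ := hex
        exfalso
        apply hu.1.2
        rw [hF]
        simp only [Set.mem_iUnion, Set.mem_Iio]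
        refine ⟨x, hxlt, ?_⟩
        rw [← blk_eq n x i hxA]
        exact hu.2
      · push_neg at hex
        obtain ⟨iu, hiu1, hiu2⟩ := aux_cover hm0 hmlt u
        obtain ⟨iv, hiv1, hiv2⟩ := aux_cover hm0 hmlt v
        have key : ∀ w z iw iz : ℕ, w ∈ (T \ F) ∩ A n i → z ∈ (T \ F) ∩ A n i →
            m iw ≤ w → w < m (iw+1) → m iz ≤ z → z < m (iz+1) → iw ≤ iz → w = z := by
          intro w z iw iz hw hz hw1 hw2 hz1 hz2 hwz
          have hwS : w ∈ S := hw.1.1.1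
          have hzS : z ∈ S := hz.1.1.1
          have hzK : z ∉ Kreg := hz.1.1.2
          have hmn : m n ≤ w := hex w hw.2
          have hniw : n ≤ iw := by
            have hlt : m n < m (iw + 1) := lt_of_le_of_lt hmn hw2
            have := hmmono.lt_iff_lt.mp hlt
            omega
          have hz3 : z < m (iw + 2) := by
            apply hmkey (iw+1) n w z
            · calc n ≤ iw + 1 := by omega
                _ ≤ m (iw + 1) := hmmono.le_apply
            · exact Nat.le_of_lt_succ (by omega)
            · rw [← blk_eq n w i hw.2]
              exact hz.2
          have hiziw : iz ≤ iw + 1 := by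
            have hlt : m iz < m (iw + 2) := lt_of_le_of_lt hz1 hz3
            have := hmmono.lt_iff_lt.mp hlt
            omega
          obtain ⟨p, hp1, hp2⟩ := aux_cover hc0 hclt iw
          have hiznr : iz ∉ Set.range b := by
            rintro ⟨j, rfl⟩
            apply hzK
            rw [hKreg, hnumem]
            exact ⟨b j, ⟨j, rfl⟩, hz1, hz2⟩
          have hizlt : iz < c (p+1) := by
            rcases Nat.lt_or_ge iz (c (p+1)) with hgood | hbad
            · exact hgood
            · exfalso
              have heq : iz = c (p+1) := by omega
              apply hiznr
              rw [heq, hcsucc]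
              exact ⟨p, rfl⟩
          have hwB : w ∈ Bp p := ⟨le_trans (hmmono.monotone hp1) hw1,
            lt_of_lt_of_le hw2 (hmmono.monotone (by omega : iw + 1 ≤ c (p+1)))⟩
          have hzB : z ∈ Bp p := by
            constructor
            · calc m (c p) ≤ m iw := hmmono.monotone hp1
                _ ≤ m iz := hmmono.monotone hwz
                _ ≤ z := hz1
            · exact lt_of_lt_of_le hz2 (hmmono.monotone (by omega : iz + 1 ≤ c (p+1)))
          exact hSsel p ⟨hwS, hwB⟩ ⟨hzS, hzB⟩
        rcases le_total iu iv with h' | h'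
        · exact key u v iu iv hu hv hiu1 hiu2 hiv1 hiv2 h'
        · exact (key v u iv iu hv hu hiv1 hiv2 hiu1 hiu2 h').symm
    have hlt := hAbad n (T \ F) hsel
    linarith
  have hTle : μ T ≤ δ := by
    apply le_of_forall_pos_le_add
    intro ε hε
    obtain ⟨n, hn⟩ := exists_nat_one_div_lt hε
    have := hTb n
    linarith
  linarith
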